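/- Let g be a constant real symmetric 3×3 matrix and Z0 a smooth vector field on an open set U ⊆ ℝ³ such that G := g(Z0,Z0) is nowhere zero on U. Let a := g·Z0 and let b be the vector field with k-th component (2/G)·Σ_{j,l} g_{kl} Z0^j ∂Z0^l/∂x^j. If ⟨curl a, a⟩ = 0 identically on U, then ⟨curl b, a⟩ = 0 identically on U. -/

import Mathlib

noncomputable section

/-- Partial derivative `∂f/∂xⁱ` at `p`. -/
def pd (i : Fin 3) (f : (Fin 3 → ℝ) → ℝ) (p : Fin 3 → ℝ) : ℝ :=
  fderiv ℝ f p (Pi.single i 1)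

/-- Gradient of a scalar function. -/
def grad (f : (Fin 3 → ℝ) → ℝ) (p : Fin 3 → ℝ) : Fin 3 → ℝ :=
  fun i => pd i f p

/-- Directional derivative `Σᵢ vⁱ ∂f/∂xⁱ` of `f` along the vector `v` at `p`. -/
def dd (v : Fin 3 → ℝ) (f : (Fin 3 → ℝ) → ℝ) (p : Fin 3 → ℝ) : ℝ :=
  ∑ i, v i * pd i f p

/-- `(∇_W W)ⁱ = Σⱼ Wʲ ∂Wⁱ/∂xʲ`. -/
def nab (W : (Fin 3 → ℝ) → (Fin 3 → ℝ)) (p : Fin 3 → ℝ) : Fin 3 → ℝ :=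
  fun i => ∑ j, W p j * pd j (fun q => W q i) p

/-- Euclidean cross product on `ℝ³`. -/
def cross (a b : Fin 3 → ℝ) : Fin 3 → ℝ :=
  ![a 1 * b 2 - a 2 * b 1, a 2 * b 0 - a 0 * b 2, a 0 * b 1 - a 1 * b 0]

/-- `g(v,w) = Σᵢⱼ gᵢⱼ vⁱ wʲ`. -/
def gB (g : Matrix (Fin 3) (Fin 3) ℝ) (v w : Fin 3 → ℝ) : ℝ :=
  ∑ i, ∑ j, g i j * v i * w j

/-- Lie bracket of vector fields: `[V,W]ⁱ = Σⱼ (Vʲ ∂Wⁱ/∂xʲ − Wʲ ∂Vⁱ/∂xʲ)`. -/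
def lieB (V W : (Fin 3 → ℝ) → (Fin 3 → ℝ)) (p : Fin 3 → ℝ) : Fin 3 → ℝ :=
  fun i => ∑ j, (V p j * pd j (fun q => W q i) p - W p j * pd j (fun q => V q i) p)

/-- curl of a vector field on `ℝ³`. -/
def curl (a : (Fin 3 → ℝ) → (Fin 3 → ℝ)) (p : Fin 3 → ℝ) : Fin 3 → ℝ :=
  ![pd 1 (fun q => a q 2) p - pd 2 (fun q => a q 1) p,
    pd 2 (fun q => a q 0) p - pd 0 (fun q => a q 2) p,
    pd 0 (fun q => a q 1) p - pd 1 (fun q => a q 0) p]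

/-- divergence of a vector field. -/
def divg (W : (Fin 3 → ℝ) → (Fin 3 → ℝ)) (p : Fin 3 → ℝ) : ℝ :=
  ∑ i, pd i (fun q => W q i) p

/-- Euclidean inner product on `ℝ³`. -/
def ip (a b : Fin 3 → ℝ) : ℝ := ∑ i, a i * b i

set_option linter.unusedVariables false

section pdl
variable {f h : (Fin 3 → ℝ) → ℝ} {p : Fin 3 → ℝ} {i : Fin 3}
lemma pd_congr (hfh : f =ᶠ[nhds p] h) : pd i f p = pd i h p := by
  unfold pd; rw [hfh.fderiv_eq]
lemma pd_const (c : ℝ) : pd i (fun _ => c) p = 0 := by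
  unfold pd; simp
lemma pd_add (hf : DifferentiableAt ℝ f p) (hh : DifferentiableAt ℝ h p) :
    pd i (fun q => f q + h q) p = pd i f p + pd i h p := by
  unfold pd; rw [fderiv_fun_add hf hh]; simp
lemma pd_sub (hf : DifferentiableAt ℝ f p) (hh : DifferentiableAt ℝ h p) :
    pd i (fun q => f q - h q) p = pd i f p - pd i h p := by
  unfold pd; rw [fderiv_fun_sub hf hh]; simp
lemma pd_mul (hf : DifferentiableAt ℝ f p) (hh : DifferentiableAt ℝ h p) :
    pd i (fun q => f q * h q) p = pd i f p * h p + f p * pd i h p := by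
  unfold pd; rw [fderiv_fun_mul hf hh]; simp; ring
lemma pd_const_mul (hf : DifferentiableAt ℝ f p) (c : ℝ) :
    pd i (fun q => c * f q) p = c * pd i f p := by
  unfold pd; rw [fderiv_const_mul hf]; simp
lemma pd_div (hf : DifferentiableAt ℝ f p) (hh : DifferentiableAt ℝ h p) (h0 : h p ≠ 0) :
    pd i (fun q => f q / h q) p = (pd i f p * h p - f p * pd i h p) / h p ^ 2 := by
  have hi : HasFDerivAt (fun q => (h q)⁻¹) ((-((h p) ^ 2)⁻¹) • fderiv ℝ h p) p :=
    (hasDerivAt_inv h0).comp_hasFDerivAt p hh.hasFDerivAt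
  have hm := hf.hasFDerivAt.fun_mul hi
  unfold pd
  simp only [div_eq_mul_inv]
  rw [hm.fderiv]
  simp
  field_simp
  ring
lemma pd_sum {ι : Type*} (s : Finset ι) (F : ι → (Fin 3 → ℝ) → ℝ)
    (hF : ∀ j ∈ s, DifferentiableAt ℝ (F j) p) :
    pd i (fun q => ∑ j ∈ s, F j q) p = ∑ j ∈ s, pd i (F j) p := by
  unfold pd; rw [fderiv_fun_sum hF]; simp
end pdl

/-- if `⟨curl a, a⟩ ≡ 0` on `U` (integrability of the `g`-orthogonal
complement of `Z0`), then `⟨curl b, a⟩ ≡ 0` on `U`. -/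
theorem lemma2_consequence
    (g : Matrix (Fin 3) (Fin 3) ℝ) (hsym : g.IsSymm)
    (U : Set (Fin 3 → ℝ)) (hU : IsOpen U)
    (Z0 : (Fin 3 → ℝ) → (Fin 3 → ℝ)) (hZ0 : ContDiffOn ℝ (⊤ : ℕ∞) Z0 U)
    (G : (Fin 3 → ℝ) → ℝ) (hG : G = fun p => gB g (Z0 p) (Z0 p))
    (hGnz : ∀ p ∈ U, G p ≠ 0)
    (a : (Fin 3 → ℝ) → (Fin 3 → ℝ)) (ha : a = fun p => g.mulVec (Z0 p))
    (b : (Fin 3 → ℝ) → (Fin 3 → ℝ))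
    (hb : b = fun p k => 2 / G p * ∑ j, ∑ l, g k l * Z0 p j * pd j (fun q => Z0 q l) p)
    (hzero : ∀ p ∈ U, ip (curl a p) (a p) = 0) :
    ∀ p ∈ U, ip (curl b p) (a p) = 0 := by
  intro p hp
  -- basic smoothness of components
  have hZat : ∀ q ∈ U, ∀ i : Fin 3, ContDiffAt ℝ (⊤ : ℕ∞) (fun r => Z0 r i) q := by
    intro q hq i
    exact ((contDiffOn_pi.mp hZ0) i).contDiffAt (hU.mem_nhds hq)
  have hZd : ∀ q ∈ U, ∀ i : Fin 3, DifferentiableAt ℝ (fun r => Z0 r i) q :=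
    fun q hq i => (hZat q hq i).differentiableAt (by simp)
  have hDZd : ∀ q ∈ U, ∀ (j i : Fin 3),
      DifferentiableAt ℝ (fun r => pd j (fun s => Z0 s i) r) q := by
    intro q hq j i
    have h1 : DifferentiableAt ℝ (fderiv ℝ (fun r => Z0 r i)) q :=
      (((hZat q hq i).fderiv_right (m := (⊤ : ℕ∞)) (by exact_mod_cast le_top))).differentiableAt (by simp)
    exact h1.clm_apply (differentiableAt_const _)
  have hsymZ : ∀ (m j i : Fin 3),
      pd m (fun q => pd j (fun r => Z0 r i) q) p = pd j (fun q => pd m (fun r => Z0 r i) q) p := by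
    intro m j i
    have hev : ∀ᶠ q in nhds p, DifferentiableAt ℝ (fun r => Z0 r i) q :=
      Filter.eventually_of_mem (hU.mem_nhds hp) (fun q hq => hZd q hq i)
    have hf' : DifferentiableAt ℝ (fderiv ℝ (fun r => Z0 r i)) p :=
      (((hZat p hp i).fderiv_right (m := (⊤ : ℕ∞)) (by exact_mod_cast le_top))).differentiableAt (by simp)
    have key : ∀ v w, fderiv ℝ (fderiv ℝ (fun r => Z0 r i)) p v w
        = fderiv ℝ (fderiv ℝ (fun r => Z0 r i)) p w v := fun v w =>
      second_derivative_symmetric_of_eventually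
        (hev.mono fun q hq => hq.hasFDerivAt) hf'.hasFDerivAt v w
    have expand : ∀ (m j : Fin 3), pd m (fun q => pd j (fun r => Z0 r i) q) p
        = fderiv ℝ (fderiv ℝ (fun r => Z0 r i)) p (Pi.single m 1) (Pi.single j 1) := by
      intro m j
      unfold pd
      rw [fderiv_clm_apply hf' (differentiableAt_const _)]
      simp
    rw [expand, expand, key]
  -- function identities
  have hA : ∀ k : Fin 3, (fun q => a q k) = (fun q => ∑ t, g k t * Z0 q t) := by
    intro k; funext q; simp [ha, Matrix.mulVec, dotProduct, Fin.sum_univ_three]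
  have hap : ∀ k, a p k = ∑ t, g k t * Z0 p t := fun k => congrFun (hA k) p
  have hGf : G = (fun q => ∑ i, ∑ j, g i j * Z0 q i * Z0 q j) := by
    rw [hG]; funext q; simp [gB]
  have hBf : ∀ k : Fin 3, (fun q => b q k)
      = (fun q => (2 * ∑ j, ∑ l, g k l * Z0 q j * pd j (fun r => Z0 r l) q) / G q) := by
    intro k; funext q; rw [hb]; ring
  -- differentiability of a-components and of pd of a-components
  have hDa : ∀ q ∈ U, ∀ k : Fin 3, DifferentiableAt ℝ (fun r => a r k) q := by
    intro q hq k
    rw [hA k]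
    exact DifferentiableAt.fun_sum fun t _ => (hZd q hq t).const_mul _
  have c1 : ∀ q ∈ U, ∀ (m k : Fin 3),
      pd m (fun r => a r k) q = ∑ t, g k t * pd m (fun r => Z0 r t) q := by
    intro q hq m k
    rw [hA k]
    exact (pd_sum _ _ fun t _ => (hZd q hq t).const_mul _).trans
      (Finset.sum_congr rfl fun t _ => pd_const_mul (hZd q hq t) _)
  have hDpa : ∀ (j k : Fin 3), DifferentiableAt ℝ (fun q => pd j (fun r => a r k) q) p := by
    intro j k
    have hd : DifferentiableAt ℝ (fun q => ∑ t, g k t * pd j (fun s => Z0 s t) q) p :=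
      DifferentiableAt.fun_sum fun t _ => (hDZd p hp j t).const_mul _
    exact hd.congr_of_eventuallyEq
      (Filter.eventuallyEq_of_mem (hU.mem_nhds hp) fun q hq => c1 q hq j k)
  have c5 : ∀ (m j k : Fin 3), pd m (fun q => pd j (fun r => a r k) q) p
      = ∑ t, g k t * pd m (fun r => pd j (fun s => Z0 s t) r) p := by
    intro m j k
    rw [pd_congr (Filter.eventuallyEq_of_mem (hU.mem_nhds hp) fun q hq => c1 q hq j k)]
    exact (pd_sum _ _ fun t _ => (hDZd p hp j t).const_mul _).trans
      (Finset.sum_congr rfl fun t _ => pd_const_mul (hDZd p hp j t) _)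
  -- G
  have hGdiff : DifferentiableAt ℝ G p := by
    rw [hGf]
    exact DifferentiableAt.fun_sum fun i _ => DifferentiableAt.fun_sum fun j _ =>
      ((hZd p hp i).const_mul _).fun_mul (hZd p hp j)
  have cG : ∀ m : Fin 3, pd m G p = ∑ i, ∑ j,
      ((g i j * pd m (fun r => Z0 r i) p) * Z0 p j + g i j * Z0 p i * pd m (fun r => Z0 r j) p) := by
    intro m
    rw [hGf]
    refine (pd_sum _ _ fun i _ => DifferentiableAt.fun_sum fun j _ =>
      ((hZd p hp i).const_mul _).fun_mul (hZd p hp j)).trans ?_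
    refine Finset.sum_congr rfl fun i _ => ?_
    refine (pd_sum _ _ fun j _ => ((hZd p hp i).const_mul _).fun_mul (hZd p hp j)).trans ?_
    refine Finset.sum_congr rfl fun j _ => ?_
    rw [pd_mul ((hZd p hp i).const_mul _) (hZd p hp j), pd_const_mul (hZd p hp i)]
  -- numerator of b
  have hNd : ∀ k : Fin 3, DifferentiableAt ℝ
      (fun q => 2 * ∑ j, ∑ l, g k l * Z0 q j * pd j (fun r => Z0 r l) q) p := by
    intro k
    exact (DifferentiableAt.fun_sum fun j _ => DifferentiableAt.fun_sum fun l _ =>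
      ((hZd p hp j).const_mul _).fun_mul (hDZd p hp j l)).const_mul 2
  have cN : ∀ (m k : Fin 3),
      pd m (fun q => 2 * ∑ j, ∑ l, g k l * Z0 q j * pd j (fun r => Z0 r l) q) p
      = 2 * ∑ j, ∑ l, ((g k l * pd m (fun r => Z0 r j) p) * pd j (fun r => Z0 r l) p
          + g k l * Z0 p j * pd m (fun r => pd j (fun s => Z0 s l) r) p) := by
    intro m k
    rw [pd_const_mul (DifferentiableAt.fun_sum fun j _ => DifferentiableAt.fun_sum fun l _ =>
      ((hZd p hp j).const_mul _).fun_mul (hDZd p hp j l)) 2]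
    congr 1
    refine (pd_sum _ _ fun j _ => DifferentiableAt.fun_sum fun l _ =>
      ((hZd p hp j).const_mul _).fun_mul (hDZd p hp j l)).trans ?_
    refine Finset.sum_congr rfl fun j _ => ?_
    refine (pd_sum _ _ fun l _ => ((hZd p hp j).const_mul _).fun_mul (hDZd p hp j l)).trans ?_
    refine Finset.sum_congr rfl fun l _ => ?_
    rw [pd_mul ((hZd p hp j).const_mul _) (hDZd p hp j l), pd_const_mul (hZd p hp j)]
  have c3 : ∀ (m k : Fin 3), pd m (fun r => b r k) p
      = (pd m (fun q => 2 * ∑ j, ∑ l, g k l * Z0 q j * pd j (fun r => Z0 r l) q) p * G p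
        - (2 * ∑ j, ∑ l, g k l * Z0 p j * pd j (fun r => Z0 r l) p) * pd m G p) / G p ^ 2 := by
    intro m k
    rw [hBf k]
    exact pd_div (hNd k) hGdiff (hGnz p hp)
  -- expand the hypothesis and its derivatives
  have hFexp : (fun q => ip (curl a q) (a q)) = (fun q =>
      (pd 1 (fun r => a r 2) q - pd 2 (fun r => a r 1) q) * a q 0
      + (pd 2 (fun r => a r 0) q - pd 0 (fun r => a r 2) q) * a q 1
      + (pd 0 (fun r => a r 1) q - pd 1 (fun r => a r 0) q) * a q 2) := by
    funext q; simp [ip, curl, Fin.sum_univ_three]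
  have h0 := hzero p hp
  simp only [ip, curl, Fin.sum_univ_three, Matrix.cons_val_zero, Matrix.cons_val_one,
    Matrix.head_cons, Matrix.cons_val_two, Matrix.tail_cons] at h0
  rw [c1 p hp 1 2, c1 p hp 2 1, c1 p hp 2 0, c1 p hp 0 2, c1 p hp 0 1, c1 p hp 1 0,
    hap 0, hap 1, hap 2] at h0
  have hmz : ∀ m : Fin 3, pd m (fun q => ip (curl a q) (a q)) p = 0 := by
    intro m
    rw [pd_congr (Filter.eventuallyEq_of_mem (hU.mem_nhds hp)
      (fun q hq => hzero q hq : Set.EqOn _ (fun _ => (0:ℝ)) U))]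
    exact pd_const 0
  have hD12 := (hDpa 1 2).fun_sub (hDpa 2 1)
  have hD20 := (hDpa 2 0).fun_sub (hDpa 0 2)
  have hD01 := (hDpa 0 1).fun_sub (hDpa 1 0)
  have hT0 := hD12.fun_mul (hDa p hp 0)
  have hT1 := hD20.fun_mul (hDa p hp 1)
  have hT2 := hD01.fun_mul (hDa p hp 2)
  have hexpand : ∀ m : Fin 3, pd m (fun q =>
      (pd 1 (fun r => a r 2) q - pd 2 (fun r => a r 1) q) * a q 0
      + (pd 2 (fun r => a r 0) q - pd 0 (fun r => a r 2) q) * a q 1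
      + (pd 0 (fun r => a r 1) q - pd 1 (fun r => a r 0) q) * a q 2) p
      = (pd m (fun q => pd 1 (fun r => a r 2) q) p - pd m (fun q => pd 2 (fun r => a r 1) q) p)
          * a p 0
        + (pd 1 (fun r => a r 2) p - pd 2 (fun r => a r 1) p) * pd m (fun r => a r 0) p
      + ((pd m (fun q => pd 2 (fun r => a r 0) q) p - pd m (fun q => pd 0 (fun r => a r 2) q) p)
          * a p 1
        + (pd 2 (fun r => a r 0) p - pd 0 (fun r => a r 2) p) * pd m (fun r => a r 1) p)
      + ((pd m (fun q => pd 0 (fun r => a r 1) q) p - pd m (fun q => pd 1 (fun r => a r 0) q) p)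
          * a p 2
        + (pd 0 (fun r => a r 1) p - pd 1 (fun r => a r 0) p) * pd m (fun r => a r 2) p) := by
    intro m
    rw [pd_add (hT0.fun_add hT1) hT2, pd_add hT0 hT1,
      pd_mul hD12 (hDa p hp 0), pd_mul hD20 (hDa p hp 1), pd_mul hD01 (hDa p hp 2),
      pd_sub (hDpa 1 2) (hDpa 2 1), pd_sub (hDpa 2 0) (hDpa 0 2), pd_sub (hDpa 0 1) (hDpa 1 0)]
    try ring
  have hm0 := hmz 0
  have hm1 := hmz 1
  have hm2 := hmz 2
  rw [hFexp] at hm0 hm1 hm2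
  rw [hexpand 0] at hm0
  rw [hexpand 1] at hm1
  rw [hexpand 2] at hm2
  simp only [c5, c1 p hp, hap] at hm0 hm1 hm2
  -- the goal
  have hGd := congrFun hGf p
  have hgoal : ip (curl b p) (a p)
      = (pd 1 (fun r => b r 2) p - pd 2 (fun r => b r 1) p) * a p 0
      + (pd 2 (fun r => b r 0) p - pd 0 (fun r => b r 2) p) * a p 1
      + (pd 0 (fun r => b r 1) p - pd 1 (fun r => b r 0) p) * a p 2 := by
    simp [ip, curl, Fin.sum_univ_three]
  rw [hgoal, c3 1 2, c3 2 1, c3 2 0, c3 0 2, c3 0 1, c3 1 0]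
  simp only [cN, cG, hap]
  simp only [div_sub_div_same, div_mul_eq_mul_div, ← add_div]
  rw [div_eq_zero_iff]
  refine Or.inl ?_
  simp only [Fin.sum_univ_three] at h0 hm0 hm1 hm2 hGd ⊢
  simp only [hsymZ 1 0, hsymZ 2 0, hsymZ 2 1, hsym.apply 0 1, hsym.apply 0 2, hsym.apply 1 2]
    at h0 hm0 hm1 hm2 hGd ⊢
  linear_combination (2 * (G p * (pd 0 (fun r => Z0 r 0) p + pd 1 (fun r => Z0 r 1) p + pd 2 (fun r => Z0 r 2) p) - ((g 0 0 * (pd 0 (fun r => Z0 r 0) p * Z0 p 0 + Z0 p 0 * pd 0 (fun r => Z0 r 0) p) + g 0 1 * (pd 0 (fun r => Z0 r 0) p * Z0 p 1 + Z0 p 0 * pd 0 (fun r => Z0 r 1) p) + g 0 2 * (pd 0 (fun r => Z0 r 0) p * Z0 p 2 + Z0 p 0 * pd 0 (fun r => Z0 r 2) p) + g 0 1 * (pd 0 (fun r => Z0 r 1) p * Z0 p 0 + Z0 p 1 * pd 0 (fun r => Z0 r 0) p) + g 1 1 * (pd 0 (fun r => Z0 r 1) p * Z0 p 1 + Z0 p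 1 * pd 0 (fun r => Z0 r 1) p) + g 1 2 * (pd 0 (fun r => Z0 r 1) p * Z0 p 2 + Z0 p 1 * pd 0 (fun r => Z0 r 2) p) + g 0 2 * (pd 0 (fun r => Z0 r 2) p * Z0 p 0 + Z0 p 2 * pd 0 (fun r => Z0 r 0) p) + g 1 2 * (pd 0 (fun r => Z0 r 2) p * Z0 p 1 + Z0 p 2 * pd 0 (fun r => Z0 r 1) p) + g 2 2 * (pd 0 (fun r => Z0 r 2) p * Z0 p 2 + Z0 p 2 * pd 0 (fun r => Z0 r 2) p)) * Z0 p 0 + (g 0 0 * (pd 1 (fun r => Z0 r 0) p * Z0 p 0 + Z0 p 0 * pd 1 (fun r => Z0 r 0) p) + g 0 1 * (pd 1 (fun r => Z0 r 0) p * Z0 p 1 + Z0 p 0 * pd 1 (fun r => Z0 r 1) p) + g 0 2 * (pd 1 (fun r => Z0 r 0) p * Z0 p 2 + Z0 p 0 * pd 1 (fun r => Z0 r 2) p) + g 0 1 * (pd 1 (fun r => Z0 r 1) p * Z0 p 0 + Z0 p 1 * pd 1 (fun r => Z0 r 0) p) + g 1 1 * (pd 1 (fun r => Z0 r 1) p *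 Z0 p 1 + Z0 p 1 * pd 1 (fun r => Z0 r 1) p) + g 1 2 * (pd 1 (fun r => Z0 r 1) p * Z0 p 2 + Z0 p 1 * pd 1 (fun r => Z0 r 2) p) + g 0 2 * (pd 1 (fun r => Z0 r 2) p * Z0 p 0 + Z0 p 2 * pd 1 (fun r => Z0 r 0) p) + g 1 2 * (pd 1 (fun r => Z0 r 2) p * Z0 p 1 + Z0 p 2 * pd 1 (fun r => Z0 r 1) p) + g 2 2 * (pd 1 (fun r => Z0 r 2) p * Z0 p 2 + Z0 p 2 * pd 1 (fun r => Z0 r 2) p)) * Z0 p 1 + (g 0 0 * (pd 2 (fun r => Z0 r 0) p * Z0 p 0 + Z0 p 0 * pd 2 (fun r => Z0 r 0) p) + g 0 1 * (pd 2 (fun r => Z0 r 0) p * Z0 p 1 + Z0 p 0 * pd 2 (fun r => Z0 r 1) p) + g 0 2 * (pd 2 (fun r => Z0 r 0) p * Z0 p 2 + Z0 p 0 * pd 2 (fun r => Z0 r 2) p) + g 0 1 * (pd 2 (fun r => Z0 r 1) p * Z0 p 0 + Z0 p 1 * pd 2 (fun r => Z0 r 0) p) + g 1 1 * (pd 2 (fun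 r => Z0 r 1) p * Z0 p 1 + Z0 p 1 * pd 2 (fun r => Z0 r 1) p) + g 1 2 * (pd 2 (fun r => Z0 r 1) p * Z0 p 2 + Z0 p 1 * pd 2 (fun r => Z0 r 2) p) + g 0 2 * (pd 2 (fun r => Z0 r 2) p * Z0 p 0 + Z0 p 2 * pd 2 (fun r => Z0 r 0) p) + g 1 2 * (pd 2 (fun r => Z0 r 2) p * Z0 p 1 + Z0 p 2 * pd 2 (fun r => Z0 r 1) p) + g 2 2 * (pd 2 (fun r => Z0 r 2) p * Z0 p 2 + Z0 p 2 * pd 2 (fun r => Z0 r 2) p)) * Z0 p 2))) * h0 + 2 * G p * (Z0 p 0 * hm0 + Z0 p 1 * hm1 + Z0 p 2 * hm2) - 2 * ((g 0 0 * (pd 0 (fun r => Z0 r 0) p * Z0 p 0 + Z0 p 0 * pd 0 (fun r => Z0 r 0) p) + g 0 1 * (pd 0 (fun r => Z0 r 0) p * Z0 p 1 + Z0 p 0 * pd 0 (fun r => Z0 r 1) p) + g 0 2 * (pd 0 (fun r => Z0 r 0) p * Z0 p 2 + Z0 p 0 * pd 0 (fun r => Z0 r 2) p) + g 0 1 * (pd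 0 (fun r => Z0 r 1) p * Z0 p 0 + Z0 p 1 * pd 0 (fun r => Z0 r 0) p) + g 1 1 * (pd 0 (fun r => Z0 r 1) p * Z0 p 1 + Z0 p 1 * pd 0 (fun r => Z0 r 1) p) + g 1 2 * (pd 0 (fun r => Z0 r 1) p * Z0 p 2 + Z0 p 1 * pd 0 (fun r => Z0 r 2) p) + g 0 2 * (pd 0 (fun r => Z0 r 2) p * Z0 p 0 + Z0 p 2 * pd 0 (fun r => Z0 r 0) p) + g 1 2 * (pd 0 (fun r => Z0 r 2) p * Z0 p 1 + Z0 p 2 * pd 0 (fun r => Z0 r 1) p) + g 2 2 * (pd 0 (fun r => Z0 r 2) p * Z0 p 2 + Z0 p 2 * pd 0 (fun r => Z0 r 2) p)) * ((g 0 2 * pd 1 (fun r => Z0 r 0) p + g 1 2 * pd 1 (fun r => Z0 r 1) p + g 2 2 * pd 1 (fun r => Z0 r 2) p) - (g 0 1 * pd 2 (fun r => Z0 r 0) p + g 1 1 * pd 2 (fun r => Z0 r 1) p + g 1 2 * pd 2 (fun r => Z0 r 2) p)) + (g 0 0 * (pd 1 (fun r => Z0 r 0) p * Z0 p 0 + Z0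 p 0 * pd 1 (fun r => Z0 r 0) p) + g 0 1 * (pd 1 (fun r => Z0 r 0) p * Z0 p 1 + Z0 p 0 * pd 1 (fun r => Z0 r 1) p) + g 0 2 * (pd 1 (fun r => Z0 r 0) p * Z0 p 2 + Z0 p 0 * pd 1 (fun r => Z0 r 2) p) + g 0 1 * (pd 1 (fun r => Z0 r 1) p * Z0 p 0 + Z0 p 1 * pd 1 (fun r => Z0 r 0) p) + g 1 1 * (pd 1 (fun r => Z0 r 1) p * Z0 p 1 + Z0 p 1 * pd 1 (fun r => Z0 r 1) p) + g 1 2 * (pd 1 (fun r => Z0 r 1) p * Z0 p 2 + Z0 p 1 * pd 1 (fun r => Z0 r 2) p) + g 0 2 * (pd 1 (fun r => Z0 r 2) p * Z0 p 0 + Z0 p 2 * pd 1 (fun r => Z0 r 0) p) + g 1 2 * (pd 1 (fun r => Z0 r 2) p * Z0 p 1 + Z0 p 2 * pd 1 (fun r => Z0 r 1) p) + g 2 2 * (pd 1 (fun r => Z0 r 2) p * Z0 p 2 + Z0 p 2 * pd 1 (fun r => Z0 r 2) p)) * ((g 0 0 * pd 2 (fun r => Z0 r 0) p + g 0 1 *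 pd 2 (fun r => Z0 r 1) p + g 0 2 * pd 2 (fun r => Z0 r 2) p) - (g 0 2 * pd 0 (fun r => Z0 r 0) p + g 1 2 * pd 0 (fun r => Z0 r 1) p + g 2 2 * pd 0 (fun r => Z0 r 2) p)) + (g 0 0 * (pd 2 (fun r => Z0 r 0) p * Z0 p 0 + Z0 p 0 * pd 2 (fun r => Z0 r 0) p) + g 0 1 * (pd 2 (fun r => Z0 r 0) p * Z0 p 1 + Z0 p 0 * pd 2 (fun r => Z0 r 1) p) + g 0 2 * (pd 2 (fun r => Z0 r 0) p * Z0 p 2 + Z0 p 0 * pd 2 (fun r => Z0 r 2) p) + g 0 1 * (pd 2 (fun r => Z0 r 1) p * Z0 p 0 + Z0 p 1 * pd 2 (fun r => Z0 r 0) p) + g 1 1 * (pd 2 (fun r => Z0 r 1) p * Z0 p 1 + Z0 p 1 * pd 2 (fun r => Z0 r 1) p) + g 1 2 * (pd 2 (fun r => Z0 r 1) p * Z0 p 2 + Z0 p 1 * pd 2 (fun r => Z0 r 2) p) + g 0 2 * (pd 2 (fun r => Z0 r 2) p * Z0 p 0 + Z0 p 2 * pd 2 (fun r => Z0 r 0)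 p) + g 1 2 * (pd 2 (fun r => Z0 r 2) p * Z0 p 1 + Z0 p 2 * pd 2 (fun r => Z0 r 1) p) + g 2 2 * (pd 2 (fun r => Z0 r 2) p * Z0 p 2 + Z0 p 2 * pd 2 (fun r => Z0 r 2) p)) * ((g 0 1 * pd 0 (fun r => Z0 r 0) p + g 1 1 * pd 0 (fun r => Z0 r 1) p + g 1 2 * pd 0 (fun r => Z0 r 2) p) - (g 0 0 * pd 1 (fun r => Z0 r 0) p + g 0 1 * pd 1 (fun r => Z0 r 1) p + g 0 2 * pd 1 (fun r => Z0 r 2) p))) * hGd
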